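/- Let G be a finite simple graph with N10 ≥ 1 four-cliques, and let k10 be the maximum number of 4-cliques of G sharing a common edge. Fix reals 0 < p ≤ 1, 0 < δ < 1 and ε > 0. Let Y10 be the number of 4-cliques of the random subgraph G̃ obtained by retaining each edge of G independently with probability p, and let X10 = Y10 / p^6. If p ≥ ( log(2/δ) · k10 / (2 ε² N10) )^{1/12}, then with probability at least 1 − δ one has |N10 − X10| ≤ ε · N10. -/

import Mathlib

set_option linter.unusedSectionVars false
set_option linter.unusedVariables false
set_option maxHeartbeats 1000000

open Finset Real

namespace FourCore

variable {ι : Type*} [Fintype ι] [DecidableEq ι]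

/-- weight of a single coordinate value -/
def wt (p : ℝ) (b : Bool) : ℝ := if b then p else 1 - p

/-- expectation under the product Bernoulli(p) measure -/
noncomputable def Ex (p : ℝ) (f : (ι → Bool) → ℝ) : ℝ :=
  ∑ ω : ι → Bool, (∏ i, wt p (ω i)) * f ω

variable {p : ℝ}

lemma wt_nonneg (h0 : 0 ≤ p) (h1 : p ≤ 1) (b : Bool) : 0 ≤ wt p b := by
  cases b <;> simp [wt] <;> linarith

lemma wt_sum : wt p true + wt p false = 1 := by simp [wt]

lemma W_nonneg (h0 : 0 ≤ p) (h1 : p ≤ 1) (ω : ι → Bool) : 0 ≤ ∏ i, wt p (ω i) :=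
  Finset.prod_nonneg fun i _ => wt_nonneg h0 h1 _

lemma Ex_nonneg (h0 : 0 ≤ p) (h1 : p ≤ 1) {f : (ι → Bool) → ℝ}
    (hf : ∀ ω, 0 ≤ f ω) : 0 ≤ Ex p f :=
  Finset.sum_nonneg fun ω _ => mul_nonneg (W_nonneg h0 h1 ω) (hf ω)

lemma Ex_mono (h0 : 0 ≤ p) (h1 : p ≤ 1) {f g : (ι → Bool) → ℝ}
    (hfg : ∀ ω, f ω ≤ g ω) : Ex p f ≤ Ex p g :=
  Finset.sum_le_sum fun ω _ =>
    mul_le_mul_of_nonneg_left (hfg ω) (W_nonneg h0 h1 ω)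

lemma Ex_add (f g : (ι → Bool) → ℝ) :
    Ex p (fun ω => f ω + g ω) = Ex p f + Ex p g := by
  simp [Ex, mul_add, Finset.sum_add_distrib]

lemma Ex_const_mul (c : ℝ) (f : (ι → Bool) → ℝ) :
    Ex p (fun ω => c * f ω) = c * Ex p f := by
  simp only [Ex, Finset.mul_sum]
  exact Finset.sum_congr rfl fun ω _ => by ring

lemma Ex_one : Ex p (fun _ : ι → Bool => (1:ℝ)) = 1 := by
  have h := Finset.prod_univ_sum (fun _ : ι => (Finset.univ : Finset Bool))
      (fun _ b => wt p b)
  simp only [Fintype.piFinset_univ] at h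
  simp only [Ex, mul_one]
  rw [← h]
  simp [wt]

lemma Ex_const (c : ℝ) : Ex p (fun _ : ι → Bool => c) = c := by
  have := Ex_const_mul (ι := ι) (p := p) c (fun _ => 1)
  simpa [Ex_one] using this



/-- product of weights off coordinate i₀ -/
noncomputable def R (p : ℝ) (i₀ : ι) (ω : ι → Bool) : ℝ :=
  ∏ i ∈ Finset.univ.erase i₀, wt p (ω i)

lemma W_eq (i₀ : ι) (ω : ι → Bool) :
    (∏ i, wt p (ω i)) = wt p (ω i₀) * R p i₀ ω := by
  exact (Finset.mul_prod_erase Finset.univ (fun i => wt p (ω i)) (Finset.mem_univ i₀)).symm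

lemma R_update (i₀ : ι) (ω : ι → Bool) (b : Bool) :
    R p i₀ (Function.update ω i₀ b) = R p i₀ ω := by
  refine Finset.prod_congr rfl fun i hi => ?_
  rw [Function.update_of_ne (Finset.ne_of_mem_erase hi)]

/-- conditional-sum form: expectation of `g ∘ update i₀ b`. -/
lemma Ex_update (i₀ : ι) (b : Bool) (g : (ι → Bool) → ℝ) :
    Ex p (fun ω => g (Function.update ω i₀ b)) =
      ∑ ω ∈ Finset.univ.filter (fun ω : ι → Bool => ω i₀ = true),
        R p i₀ ω * g (Function.update ω i₀ b) := by
  classical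
  have hsplit := Finset.sum_filter_add_sum_filter_not (Finset.univ : Finset (ι → Bool))
    (fun ω => ω i₀ = true)
    (fun ω => (∏ i, wt p (ω i)) * g (Function.update ω i₀ b))
  rw [Ex, ← hsplit]
  have h1 : ∑ ω ∈ Finset.univ.filter (fun ω : ι → Bool => ω i₀ = true),
      (∏ i, wt p (ω i)) * g (Function.update ω i₀ b)
      = ∑ ω ∈ Finset.univ.filter (fun ω : ι → Bool => ω i₀ = true),
        p * (R p i₀ ω * g (Function.update ω i₀ b)) := by
    refine Finset.sum_congr rfl fun ω hω => ?_
    have hb : ω i₀ = true := (Finset.mem_filter.mp hω).2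
    rw [W_eq i₀ ω, hb]; simp [wt]; ring
  have h2 : ∑ ω ∈ Finset.univ.filter (fun ω : ι → Bool => ¬ ω i₀ = true),
      (∏ i, wt p (ω i)) * g (Function.update ω i₀ b)
      = ∑ ω ∈ Finset.univ.filter (fun ω : ι → Bool => ω i₀ = true),
        (1 - p) * (R p i₀ ω * g (Function.update ω i₀ b)) := by
    refine Finset.sum_nbij' (fun ω => Function.update ω i₀ true)
      (fun ω => Function.update ω i₀ false) ?_ ?_ ?_ ?_ ?_
    · intro ω hω
      simp [Function.update_self]
    · intro ω hω
      simp [Function.update_self]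
    · intro ω hω
      have hb : ω i₀ = false := by
        have := (Finset.mem_filter.mp hω).2
        simpa using this
      simp only [Function.update_idem, ← hb, Function.update_eq_self]
    · intro ω hω
      have hb : ω i₀ = true := (Finset.mem_filter.mp hω).2
      simp only [Function.update_idem, ← hb, Function.update_eq_self]
    · intro ω hω
      have hb : ω i₀ = false := by
        have := (Finset.mem_filter.mp hω).2
        simpa using this
      simp only [W_eq i₀ ω, hb, R_update, Function.update_idem]
      simp [wt]
      ring
  rw [h1, h2, ← Finset.sum_add_distrib]
  refine Finset.sum_congr rfl fun ω hω => by ring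

/-- Decomposition of the expectation at coordinate `i₀`. -/
lemma Ex_decomp (i₀ : ι) (f : (ι → Bool) → ℝ) :
    Ex p f = p * Ex p (fun ω => f (Function.update ω i₀ true))
           + (1 - p) * Ex p (fun ω => f (Function.update ω i₀ false)) := by
  classical
  rw [Ex_update, Ex_update]
  have hsplit := Finset.sum_filter_add_sum_filter_not (Finset.univ : Finset (ι → Bool))
    (fun ω => ω i₀ = true) (fun ω => (∏ i, wt p (ω i)) * f ω)
  rw [Ex, ← hsplit]
  have h1 : ∑ ω ∈ Finset.univ.filter (fun ω : ι → Bool => ω i₀ = true),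
      (∏ i, wt p (ω i)) * f ω
      = ∑ ω ∈ Finset.univ.filter (fun ω : ι → Bool => ω i₀ = true),
        p * (R p i₀ ω * f (Function.update ω i₀ true)) := by
    refine Finset.sum_congr rfl fun ω hω => ?_
    have hb : ω i₀ = true := (Finset.mem_filter.mp hω).2
    rw [W_eq i₀ ω, hb]
    nth_rewrite 2 [← hb]
    rw [Function.update_eq_self]
    simp [wt]; ring
  have h2 : ∑ ω ∈ Finset.univ.filter (fun ω : ι → Bool => ¬ ω i₀ = true),
      (∏ i, wt p (ω i)) * f ω
      = ∑ ω ∈ Finset.univ.filter (fun ω : ι → Bool => ω i₀ = true),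
        (1 - p) * (R p i₀ ω * f (Function.update ω i₀ false)) := by
    refine Finset.sum_nbij' (fun ω => Function.update ω i₀ true)
      (fun ω => Function.update ω i₀ false) ?_ ?_ ?_ ?_ ?_
    · intro ω hω; simp [Function.update_self]
    · intro ω hω; simp [Function.update_self]
    · intro ω hω
      have hb : ω i₀ = false := by simpa using (Finset.mem_filter.mp hω).2
      simp only [Function.update_idem, ← hb, Function.update_eq_self]
    · intro ω hω
      have hb : ω i₀ = true := (Finset.mem_filter.mp hω).2
      simp only [Function.update_idem, ← hb, Function.update_eq_self]
    · intro ω hω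
      have hb : ω i₀ = false := by simpa using (Finset.mem_filter.mp hω).2
      have hupd : Function.update ω i₀ false = ω := by
        rw [← hb]; exact Function.update_eq_self _ _
      simp only [Function.update_idem, R_update, hupd]
      rw [W_eq i₀ ω, hb]
      simp [wt]; ring
  rw [h1, h2, Finset.mul_sum, Finset.mul_sum]

/-- Expectation of an indicator-type function of "all coordinates in `A` are true". -/
lemma Ex_bernoulli (h0 : 0 ≤ p) (h1 : p ≤ 1) (A : Finset ι) (x y : ℝ) :
    Ex p (fun ω => if ∀ i ∈ A, ω i = true then x else y)
      = p ^ A.card * x + (1 - p ^ A.card) * y := by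
  classical
  induction A using Finset.cons_induction with
  | empty => simp [Ex_const]
  | cons a s ha ih =>
    rw [Ex_decomp a]
    have e1 : (fun ω : ι → Bool =>
        if ∀ i ∈ Finset.cons a s ha, (Function.update ω a true) i = true then x else y)
        = fun ω => if ∀ i ∈ s, ω i = true then x else y := by
      funext ω
      refine if_congr ?_ rfl rfl
      constructor
      · intro h i hi
        have := h i (Finset.mem_cons_of_mem hi)
        rwa [Function.update_of_ne (fun he => ha (by rw [← he]; exact hi))] at this
      · intro h i hi
        rcases Finset.mem_cons.mp hi with rfl | hi
        · simp [Function.update_self]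
        · rw [Function.update_of_ne (fun he => ha (by rw [← he]; exact hi))]
          exact h i hi
    have e2 : (fun ω : ι → Bool =>
        if ∀ i ∈ Finset.cons a s ha, (Function.update ω a false) i = true then x else y)
        = fun _ => y := by
      funext ω
      rw [if_neg]
      intro h
      have := h a (Finset.mem_cons_self a s)
      simp [Function.update_self] at this
    rw [e1, e2, ih, Ex_const, Finset.card_cons]
    ring


/-- Weighted AM-GM with total weight `card/k ≤ 1`, padded with 1. -/
lemma amgm_pad {J : Type*} {k : ℕ} (hk : 1 ≤ k) (s : Finset J) (hcard : s.card ≤ k)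
    {x : J → ℝ} (hx : ∀ j ∈ s, 0 ≤ x j) :
    ∏ j ∈ s, x j ^ ((k:ℝ)⁻¹) ≤ 1 - s.card * (k:ℝ)⁻¹ + (k:ℝ)⁻¹ * ∑ j ∈ s, x j := by
  classical
  have hk0 : (0:ℝ) < (k:ℝ) := by exact_mod_cast Nat.lt_of_lt_of_le Nat.zero_lt_one hk
  have hθ : (0:ℝ) ≤ (k:ℝ)⁻¹ := by positivity
  have hw0 : (0:ℝ) ≤ 1 - s.card * (k:ℝ)⁻¹ := by
    have : (s.card : ℝ) * (k:ℝ)⁻¹ ≤ (k:ℝ) * (k:ℝ)⁻¹ :=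
      mul_le_mul_of_nonneg_right (by exact_mod_cast hcard) hθ
    rw [mul_inv_cancel₀ (ne_of_gt hk0)] at this
    linarith
  set t : Finset (Option J) := insert none (s.map Function.Embedding.some) with ht
  have hnone : none ∉ s.map Function.Embedding.some := by
    simp
  have key := Real.geom_mean_le_arith_mean_weighted t
    (fun o => Option.elim o (1 - s.card * (k:ℝ)⁻¹) (fun _ => (k:ℝ)⁻¹))
    (fun o => Option.elim o 1 x) ?_ ?_ ?_
  · rw [ht, Finset.prod_insert hnone, Finset.sum_insert hnone,
      Finset.prod_map, Finset.sum_map] at key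
    simp only [Option.elim, Function.Embedding.some_apply] at key
    rw [Real.one_rpow, one_mul, mul_one] at key
    calc ∏ j ∈ s, x j ^ ((k:ℝ)⁻¹) ≤
        (1 - s.card * (k:ℝ)⁻¹) + ∑ j ∈ s, (k:ℝ)⁻¹ * x j := key
      _ = 1 - s.card * (k:ℝ)⁻¹ + (k:ℝ)⁻¹ * ∑ j ∈ s, x j := by
          rw [Finset.mul_sum]
  · intro o ho
    cases o with
    | none => simpa using hw0
    | some j => simpa using hθ
  · rw [ht, Finset.sum_insert hnone, Finset.sum_map]
    simp only [Option.elim, Function.Embedding.some_apply]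
    rw [Finset.sum_const, nsmul_eq_mul]
    ring
  · intro o ho
    cases o with
    | none => simp
    | some j =>
      simp only [Option.elim]
      refine hx j ?_
      rw [ht] at ho
      rcases Finset.mem_insert.mp ho with h | h
      · exact absurd h (by simp)
      · rcases Finset.mem_map.mp h with ⟨a, haa, hae⟩
        have : a = j := by simpa using hae
        rwa [← this]

/-- Two-point Hoelder inequality for at most `k` functions with exponents `1/k`. -/
lemma holder_two {J : Type*} {k : ℕ} (hk : 1 ≤ k) (s : Finset J) (hcard : s.card ≤ k)
    {a b : J → ℝ} (ha : ∀ j ∈ s, 0 ≤ a j) (hb : ∀ j ∈ s, 0 ≤ b j)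
    {w₁ w₂ : ℝ} (hw₁ : 0 ≤ w₁) (hw₂ : 0 ≤ w₂) (hw : w₁ + w₂ = 1) :
    w₁ * ∏ j ∈ s, a j ^ ((k:ℝ)⁻¹) + w₂ * ∏ j ∈ s, b j ^ ((k:ℝ)⁻¹)
      ≤ ∏ j ∈ s, (w₁ * a j + w₂ * b j) ^ ((k:ℝ)⁻¹) := by
  classical
  have hk0 : (0:ℝ) < (k:ℝ) := by exact_mod_cast Nat.lt_of_lt_of_le Nat.zero_lt_one hk
  have hkinv : ((k:ℝ)⁻¹) ≠ 0 := by positivity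
  have hM : ∀ j ∈ s, 0 ≤ w₁ * a j + w₂ * b j := fun j hj =>
    add_nonneg (mul_nonneg hw₁ (ha j hj)) (mul_nonneg hw₂ (hb j hj))
  by_cases hpos : ∀ j ∈ s, 0 < w₁ * a j + w₂ * b j
  · have prodsplit : ∀ (c : J → ℝ), (∀ j ∈ s, 0 ≤ c j) →
        ∏ j ∈ s, c j ^ ((k:ℝ)⁻¹)
          = (∏ j ∈ s, (c j / (w₁ * a j + w₂ * b j)) ^ ((k:ℝ)⁻¹))
            * ∏ j ∈ s, (w₁ * a j + w₂ * b j) ^ ((k:ℝ)⁻¹) := by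
      intro c hc
      rw [← Finset.prod_mul_distrib]
      refine Finset.prod_congr rfl fun j hj => ?_
      rw [← Real.mul_rpow (div_nonneg (hc j hj) (le_of_lt (hpos j hj)))
        (le_of_lt (hpos j hj))]
      rw [div_mul_cancel₀ _ (ne_of_gt (hpos j hj))]
    rw [prodsplit a ha, prodsplit b hb]
    have hPM : 0 ≤ ∏ j ∈ s, (w₁ * a j + w₂ * b j) ^ ((k:ℝ)⁻¹) :=
      Finset.prod_nonneg fun j hj => Real.rpow_nonneg (hM j hj) _
    have amg_a := amgm_pad hk s hcard (x := fun j => a j / (w₁ * a j + w₂ * b j))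
      (fun j hj => div_nonneg (ha j hj) (le_of_lt (hpos j hj)))
    have amg_b := amgm_pad hk s hcard (x := fun j => b j / (w₁ * a j + w₂ * b j))
      (fun j hj => div_nonneg (hb j hj) (le_of_lt (hpos j hj)))
    have key : w₁ * ∑ j ∈ s, a j / (w₁ * a j + w₂ * b j)
        + w₂ * ∑ j ∈ s, b j / (w₁ * a j + w₂ * b j) = s.card := by
      rw [Finset.mul_sum, Finset.mul_sum, ← Finset.sum_add_distrib]
      have hone : ∀ j ∈ s, w₁ * (a j / (w₁ * a j + w₂ * b j))
          + w₂ * (b j / (w₁ * a j + w₂ * b j)) = 1 := by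
        intro j hj
        rw [mul_div_assoc', mul_div_assoc', ← add_div,
          div_self (ne_of_gt (hpos j hj))]
      rw [Finset.sum_congr rfl hone, Finset.sum_const, nsmul_eq_mul, mul_one]
    have hsum : w₁ * (1 - s.card * (k:ℝ)⁻¹ + (k:ℝ)⁻¹ * ∑ j ∈ s, a j / (w₁ * a j + w₂ * b j))
        + w₂ * (1 - s.card * (k:ℝ)⁻¹ + (k:ℝ)⁻¹ * ∑ j ∈ s, b j / (w₁ * a j + w₂ * b j))
        = 1 := by
      linear_combination (1 - (s.card:ℝ) * ((k:ℝ))⁻¹) * hw + ((k:ℝ))⁻¹ * key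
    calc w₁ * ((∏ j ∈ s, (a j / (w₁ * a j + w₂ * b j)) ^ ((k:ℝ)⁻¹))
            * ∏ j ∈ s, (w₁ * a j + w₂ * b j) ^ ((k:ℝ)⁻¹))
        + w₂ * ((∏ j ∈ s, (b j / (w₁ * a j + w₂ * b j)) ^ ((k:ℝ)⁻¹))
            * ∏ j ∈ s, (w₁ * a j + w₂ * b j) ^ ((k:ℝ)⁻¹))
        ≤ w₁ * ((1 - s.card * (k:ℝ)⁻¹ + (k:ℝ)⁻¹ * ∑ j ∈ s, a j / (w₁ * a j + w₂ * b j))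
            * ∏ j ∈ s, (w₁ * a j + w₂ * b j) ^ ((k:ℝ)⁻¹))
        + w₂ * ((1 - s.card * (k:ℝ)⁻¹ + (k:ℝ)⁻¹ * ∑ j ∈ s, b j / (w₁ * a j + w₂ * b j))
            * ∏ j ∈ s, (w₁ * a j + w₂ * b j) ^ ((k:ℝ)⁻¹)) := by
          exact add_le_add
            (mul_le_mul_of_nonneg_left (mul_le_mul_of_nonneg_right amg_a hPM) hw₁)
            (mul_le_mul_of_nonneg_left (mul_le_mul_of_nonneg_right amg_b hPM) hw₂)
      _ = ∏ j ∈ s, (w₁ * a j + w₂ * b j) ^ ((k:ℝ)⁻¹) := by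
          linear_combination (∏ j ∈ s, (w₁ * a j + w₂ * b j) ^ ((k:ℝ)⁻¹)) * hsum
  · push_neg at hpos
    obtain ⟨j₁, hj₁, hMj₁⟩ := hpos
    have hMj₁0 : w₁ * a j₁ + w₂ * b j₁ = 0 := le_antisymm hMj₁ (hM j₁ hj₁)
    have hwa : w₁ * a j₁ = 0 ∧ w₂ * b j₁ = 0 := by
      constructor <;>
        nlinarith [mul_nonneg hw₁ (ha j₁ hj₁), mul_nonneg hw₂ (hb j₁ hj₁)]
    have hR : ∏ j ∈ s, (w₁ * a j + w₂ * b j) ^ ((k:ℝ)⁻¹) = 0 := by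
      refine Finset.prod_eq_zero hj₁ ?_
      rw [hMj₁0, Real.zero_rpow hkinv]
    rw [hR]
    have t1 : w₁ * ∏ j ∈ s, a j ^ ((k:ℝ)⁻¹) = 0 := by
      rcases mul_eq_zero.mp hwa.1 with h | h
      · rw [h, zero_mul]
      · rw [Finset.prod_eq_zero hj₁ (by rw [h, Real.zero_rpow hkinv]), mul_zero]
    have t2 : w₂ * ∏ j ∈ s, b j ^ ((k:ℝ)⁻¹) = 0 := by
      rcases mul_eq_zero.mp hwa.2 with h | h
      · rw [h, zero_mul]
      · rw [Finset.prod_eq_zero hj₁ (by rw [h, Real.zero_rpow hkinv]), mul_zero]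
    rw [t1, t2]; norm_num


lemma pow_rpow_inv_nat {k : ℕ} (hk : 1 ≤ k) {x : ℝ} (hx : 0 ≤ x) :
    (x ^ k) ^ ((k:ℝ)⁻¹) = x := by
  have hk0 : (k:ℝ) ≠ 0 := by positivity
  rw [← Real.rpow_natCast x k, ← Real.rpow_mul hx, mul_inv_cancel₀ hk0, Real.rpow_one]

/-- Finner's generalized Hoelder inequality (uniform exponent `1/k`). -/
theorem finner {J : Type*} {k : ℕ} (hk : 1 ≤ k) (h0 : 0 ≤ p) (h1 : p ≤ 1)
    (u : Finset ι) :
    ∀ (S : Finset J) (g : J → (ι → Bool) → ℝ) (A : J → Finset ι),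
    (∀ j ∈ S, ∀ ω, 0 ≤ g j ω) →
    (∀ j ∈ S, ∀ ω ω', (∀ i ∈ A j, ω i = ω' i) → g j ω = g j ω') →
    (∀ j ∈ S, A j ⊆ u) →
    (∀ i : ι, (S.filter (fun j => i ∈ A j)).card ≤ k) →
    Ex p (fun ω => ∏ j ∈ S, g j ω) ≤ ∏ j ∈ S, (Ex p (fun ω => g j ω ^ k)) ^ ((k:ℝ)⁻¹) := by
  classical
  induction u using Finset.cons_induction with
  | empty =>
    intro S g A hnn hdep hsub hmult
    set ω₀ : ι → Bool := fun _ => true with hω₀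
    have hconst : ∀ j ∈ S, ∀ ω, g j ω = g j ω₀ := by
      intro j hj ω
      refine hdep j hj ω ω₀ fun i hi => absurd (hsub j hj hi) (Finset.notMem_empty i)
    have e1 : (fun ω : ι → Bool => ∏ j ∈ S, g j ω) = fun _ => ∏ j ∈ S, g j ω₀ := by
      funext ω
      exact Finset.prod_congr rfl fun j hj => hconst j hj ω
    rw [e1, Ex_const]
    refine le_of_eq (Finset.prod_congr rfl fun j hj => ?_).symm
    have e2 : (fun ω : ι → Bool => g j ω ^ k) = fun _ => g j ω₀ ^ k := by
      funext ω; rw [hconst j hj ω]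
    rw [e2, Ex_const, pow_rpow_inv_nat hk (hnn j hj ω₀)]
  | cons i₀ u' hi₀ ih =>
    intro S g A hnn hdep hsub hmult
    -- apply the induction hypothesis for a fixed value of coordinate i₀
    have IH : ∀ b : Bool,
        Ex p (fun ω => ∏ j ∈ S, g j (Function.update ω i₀ b))
          ≤ ∏ j ∈ S, (Ex p (fun ω => g j (Function.update ω i₀ b) ^ k)) ^ ((k:ℝ)⁻¹) := by
      intro b
      refine ih S (fun j ω => g j (Function.update ω i₀ b)) (fun j => (A j).erase i₀)
        (fun j hj ω => hnn j hj _) ?_ ?_ ?_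
      · intro j hj ω ω' hagree
        refine hdep j hj _ _ fun i hi => ?_
        rcases eq_or_ne i i₀ with rfl | hne
        · simp [Function.update_self]
        · rw [Function.update_of_ne hne, Function.update_of_ne hne]
          exact hagree i (Finset.mem_erase.mpr ⟨hne, hi⟩)
      · intro j hj i hi
        have h2 := hsub j hj (Finset.mem_of_mem_erase hi)
        rcases Finset.mem_cons.mp h2 with rfl | h3
        · exact absurd rfl (Finset.mem_erase.mp hi).1
        · exact h3
      · intro i
        refine le_trans (Finset.card_le_card ?_) (hmult i)
        intro j hj
        rw [Finset.mem_filter] at hj ⊢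
        exact ⟨hj.1, Finset.mem_of_mem_erase hj.2⟩
    have hdecomp := Ex_decomp (p := p) i₀ (fun ω => ∏ j ∈ S, g j ω)
    rw [hdecomp]
    have hMnn : ∀ (b : Bool), ∀ j ∈ S, 0 ≤ Ex p (fun ω => g j (Function.update ω i₀ b) ^ k) :=
      fun b j hj => Ex_nonneg h0 h1 fun ω => pow_nonneg (hnn j hj _) k
    have hEnn : ∀ j ∈ S, 0 ≤ Ex p (fun ω => g j ω ^ k) :=
      fun j hj => Ex_nonneg h0 h1 fun ω => pow_nonneg (hnn j hj _) k
    have step1 : p * Ex p (fun ω => ∏ j ∈ S, g j (Function.update ω i₀ true))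
        + (1 - p) * Ex p (fun ω => ∏ j ∈ S, g j (Function.update ω i₀ false))
        ≤ p * ∏ j ∈ S, (Ex p (fun ω => g j (Function.update ω i₀ true) ^ k)) ^ ((k:ℝ)⁻¹)
        + (1 - p) * ∏ j ∈ S, (Ex p (fun ω => g j (Function.update ω i₀ false) ^ k)) ^ ((k:ℝ)⁻¹) :=
      add_le_add (mul_le_mul_of_nonneg_left (IH true) h0)
        (mul_le_mul_of_nonneg_left (IH false) (by linarith))
    refine le_trans step1 ?_
    -- split each product over S into S0 (i₀ used) and the rest
    have hsplitP : ∀ b : Bool,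
        ∏ j ∈ S, (Ex p (fun ω => g j (Function.update ω i₀ b) ^ k)) ^ ((k:ℝ)⁻¹)
        = (∏ j ∈ S.filter (fun j => i₀ ∈ A j),
            (Ex p (fun ω => g j (Function.update ω i₀ b) ^ k)) ^ ((k:ℝ)⁻¹))
          * ∏ j ∈ S.filter (fun j => ¬ i₀ ∈ A j),
            (Ex p (fun ω => g j ω ^ k)) ^ ((k:ℝ)⁻¹) := by
      intro b
      rw [← Finset.prod_filter_mul_prod_filter_not S (fun j => i₀ ∈ A j)]
      congr 1
      refine Finset.prod_congr rfl fun j hj => ?_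
      have hj' := Finset.mem_filter.mp hj
      have : (fun ω : ι → Bool => g j (Function.update ω i₀ b) ^ k)
          = fun ω => g j ω ^ k := by
        funext ω
        congr 1
        refine hdep j hj'.1 _ _ fun i hi => ?_
        have hne : i ≠ i₀ := fun he => hj'.2 (he ▸ hi)
        rw [Function.update_of_ne hne]
      rw [this]
    rw [hsplitP true, hsplitP false]
    have hCnn : 0 ≤ ∏ j ∈ S.filter (fun j => ¬ i₀ ∈ A j),
        (Ex p (fun ω => g j ω ^ k)) ^ ((k:ℝ)⁻¹) :=
      Finset.prod_nonneg fun j hj =>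
        Real.rpow_nonneg (hEnn j (Finset.mem_of_mem_filter j hj)) _
    have hholder := holder_two hk (S.filter (fun j => i₀ ∈ A j)) (hmult i₀)
      (a := fun j => Ex p (fun ω => g j (Function.update ω i₀ true) ^ k))
      (b := fun j => Ex p (fun ω => g j (Function.update ω i₀ false) ^ k))
      (fun j hj => hMnn true j (Finset.mem_of_mem_filter j hj))
      (fun j hj => hMnn false j (Finset.mem_of_mem_filter j hj))
      h0 (by linarith : (0:ℝ) ≤ 1 - p) (by ring)
    have hEdecomp : ∀ j ∈ S.filter (fun j => i₀ ∈ A j),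
        (p * Ex p (fun ω => g j (Function.update ω i₀ true) ^ k)
          + (1 - p) * Ex p (fun ω => g j (Function.update ω i₀ false) ^ k)) ^ ((k:ℝ)⁻¹)
        = (Ex p (fun ω => g j ω ^ k)) ^ ((k:ℝ)⁻¹) := by
      intro j hj
      congr 1
      have := Ex_decomp (p := p) i₀ (fun ω => g j ω ^ k)
      rw [← this]
    calc p * ((∏ j ∈ S.filter (fun j => i₀ ∈ A j),
            (Ex p (fun ω => g j (Function.update ω i₀ true) ^ k)) ^ ((k:ℝ)⁻¹))
          * ∏ j ∈ S.filter (fun j => ¬ i₀ ∈ A j), (Ex p (fun ω => g j ω ^ k)) ^ ((k:ℝ)⁻¹))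
        + (1 - p) * ((∏ j ∈ S.filter (fun j => i₀ ∈ A j),
            (Ex p (fun ω => g j (Function.update ω i₀ false) ^ k)) ^ ((k:ℝ)⁻¹))
          * ∏ j ∈ S.filter (fun j => ¬ i₀ ∈ A j), (Ex p (fun ω => g j ω ^ k)) ^ ((k:ℝ)⁻¹))
        = (p * ∏ j ∈ S.filter (fun j => i₀ ∈ A j),
            (Ex p (fun ω => g j (Function.update ω i₀ true) ^ k)) ^ ((k:ℝ)⁻¹)
          + (1 - p) * ∏ j ∈ S.filter (fun j => i₀ ∈ A j),
            (Ex p (fun ω => g j (Function.update ω i₀ false) ^ k)) ^ ((k:ℝ)⁻¹))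
          * ∏ j ∈ S.filter (fun j => ¬ i₀ ∈ A j), (Ex p (fun ω => g j ω ^ k)) ^ ((k:ℝ)⁻¹) := by
          ring
      _ ≤ (∏ j ∈ S.filter (fun j => i₀ ∈ A j),
            (p * Ex p (fun ω => g j (Function.update ω i₀ true) ^ k)
              + (1 - p) * Ex p (fun ω => g j (Function.update ω i₀ false) ^ k)) ^ ((k:ℝ)⁻¹))
          * ∏ j ∈ S.filter (fun j => ¬ i₀ ∈ A j), (Ex p (fun ω => g j ω ^ k)) ^ ((k:ℝ)⁻¹) :=
          mul_le_mul_of_nonneg_right hholder hCnn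
      _ = (∏ j ∈ S.filter (fun j => i₀ ∈ A j), (Ex p (fun ω => g j ω ^ k)) ^ ((k:ℝ)⁻¹))
          * ∏ j ∈ S.filter (fun j => ¬ i₀ ∈ A j), (Ex p (fun ω => g j ω ^ k)) ^ ((k:ℝ)⁻¹) := by
          rw [Finset.prod_congr rfl hEdecomp]
      _ = ∏ j ∈ S, (Ex p (fun ω => g j ω ^ k)) ^ ((k:ℝ)⁻¹) :=
          Finset.prod_filter_mul_prod_filter_not S _ _



lemma hoeffding_bernoulli {q : ℝ} (hq0 : 0 ≤ q) (hq1 : q ≤ 1) (s : ℝ) :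
    q * exp (s * (1 - q)) + (1 - q) * exp (-(s * q)) ≤ exp (s ^ 2 / 8) := by
  have hD : ∀ x : ℝ, 0 < 1 - q + q * exp x := by
    intro x
    rcases lt_or_eq_of_le hq1 with h | h
    · have : 0 ≤ q * exp x := mul_nonneg hq0 (exp_pos x).le
      linarith
    · rw [h]; simpa using exp_pos x
  -- the gap function
  set g : ℝ → ℝ := fun x => q * x + x ^ 2 / 8 - log (1 - q + q * exp x) with hgdef
  set g1 : ℝ → ℝ := fun x => q + x / 4 - q * exp x / (1 - q + q * exp x) with hg1def
  have hDd : ∀ x : ℝ, HasDerivAt (fun y : ℝ => 1 - q + q * exp y) (q * exp x) x := by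
    intro x
    simpa using ((Real.hasDerivAt_exp x).const_mul q).const_add (1 - q)
  have hg : ∀ x : ℝ, HasDerivAt g (g1 x) x := by
    intro x
    have h1 : HasDerivAt (fun y : ℝ => q * y) q x := by
      simpa using (hasDerivAt_id x).const_mul q
    have h2 : HasDerivAt (fun y : ℝ => y ^ 2 / 8) (x / 4) x := by
      have := (hasDerivAt_pow 2 x).div_const 8
      refine this.congr_deriv ?_
      norm_num
      ring
    have h3 : HasDerivAt (fun y : ℝ => log (1 - q + q * exp y))
        (q * exp x / (1 - q + q * exp x)) x := (hDd x).log (ne_of_gt (hD x))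
    exact (h1.add h2).sub h3
  have hg1 : ∀ x : ℝ, HasDerivAt g1
      (1 / 4 - (q * exp x * (1 - q + q * exp x) - q * exp x * (q * exp x))
        / (1 - q + q * exp x) ^ 2) x := by
    intro x
    have hq4 : HasDerivAt (fun y : ℝ => q + y / 4) (1 / 4) x := by
      simpa using ((hasDerivAt_id x).div_const 4).const_add q
    have hnum : HasDerivAt (fun y : ℝ => q * exp y) (q * exp x) x :=
      (Real.hasDerivAt_exp x).const_mul q
    have hdiv := hnum.div (hDd x) (ne_of_gt (hD x))
    exact hq4.sub hdiv
  have hg1nn : ∀ x : ℝ, 0 ≤ 1 / 4 - (q * exp x * (1 - q + q * exp x) - q * exp x * (q * exp x))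
      / (1 - q + q * exp x) ^ 2 := by
    intro x
    set a := q * exp x with ha
    set D := 1 - q + q * exp x with hDdef
    have hD0 : 0 < D := hD x
    have key : (a * D - a * a) / D ^ 2 ≤ 1 / 4 := by
      rw [div_le_iff₀ (by positivity)]
      nlinarith [sq_nonneg (D - 2 * a)]
    linarith
  have hg1mono : Monotone g1 := by
    have hdiff : Differentiable ℝ g1 := fun x => (hg1 x).differentiableAt
    refine monotone_of_deriv_nonneg hdiff ?_
    intro x
    rw [(hg1 x).deriv]
    exact hg1nn x
  have hg10 : g1 0 = 0 := by
    simp [hg1def]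
  have hgnn : ∀ x : ℝ, 0 ≤ g x := by
    have hg0 : g 0 = 0 := by simp [hgdef]
    intro x
    rcases le_or_gt 0 x with hx | hx
    · have hmono : MonotoneOn g (Set.Ici (0:ℝ)) := by
        refine monotoneOn_of_deriv_nonneg (convex_Ici 0)
          (Continuous.continuousOn (by
            have : Differentiable ℝ g := fun y => (hg y).differentiableAt
            exact this.continuous))
          (fun y hy => ((hg y).differentiableAt).differentiableWithinAt) ?_
        intro y hy
        rw [(hg y).deriv]
        rw [interior_Ici] at hy
        have : (0:ℝ) ≤ y := le_of_lt hy
        calc (0:ℝ) = g1 0 := hg10.symm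
          _ ≤ g1 y := hg1mono this
      have := hmono (Set.mem_Ici.mpr (le_refl (0:ℝ))) (Set.mem_Ici.mpr hx) hx
      rw [hg0] at this
      exact this
    · have hanti : AntitoneOn g (Set.Iic (0:ℝ)) := by
        refine antitoneOn_of_deriv_nonpos (convex_Iic 0)
          (Continuous.continuousOn (by
            have : Differentiable ℝ g := fun y => (hg y).differentiableAt
            exact this.continuous))
          (fun y hy => ((hg y).differentiableAt).differentiableWithinAt) ?_
        intro y hy
        rw [(hg y).deriv]
        rw [interior_Iic] at hy
        calc g1 y ≤ g1 0 := hg1mono (le_of_lt hy)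
          _ = 0 := hg10
      have := hanti (Set.mem_Iic.mpr (le_of_lt hx)) (Set.mem_Iic.mpr (le_refl (0:ℝ))) (le_of_lt hx)
      rw [hg0] at this
      exact this
  -- conclude
  have hlog : log (1 - q + q * exp s) ≤ q * s + s ^ 2 / 8 := by
    have := hgnn s
    simp only [hgdef] at this
    linarith
  have hDle : 1 - q + q * exp s ≤ exp (q * s + s ^ 2 / 8) :=
    (Real.log_le_iff_le_exp (hD s)).mp hlog
  have hexp : q * exp (s * (1 - q)) + (1 - q) * exp (-(s * q))
      = exp (-(s * q)) * (1 - q + q * exp s) := by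
    have h1 : exp (s * (1 - q)) = exp s * exp (-(s * q)) := by
      rw [← Real.exp_add]; ring_nf
    rw [h1]; ring
  rw [hexp]
  calc exp (-(s * q)) * (1 - q + q * exp s)
      ≤ exp (-(s * q)) * exp (q * s + s ^ 2 / 8) :=
        mul_le_mul_of_nonneg_left hDle (exp_pos _).le
    _ = exp (s ^ 2 / 8) := by
        rw [← Real.exp_add]; ring_nf


section MGF

variable {ι : Type*} [Fintype ι] [DecidableEq ι] {J : Type*} {p : ℝ}

/-- the count of "all coordinates in `A j` are true", as a real number -/
noncomputable def Yc (S : Finset J) (A : J → Finset ι) (ω : ι → Bool) : ℝ :=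
  ((S.filter fun j => ∀ i ∈ A j, ω i = true).card : ℝ)

lemma Yc_eq_sum (S : Finset J) (A : J → Finset ι) (ω : ι → Bool) :
    Yc S A ω = ∑ j ∈ S, (if ∀ i ∈ A j, ω i = true then (1:ℝ) else 0) := by
  classical
  rw [Yc, Finset.card_filter]
  push_cast
  rfl

theorem mgf_bound {k c : ℕ} (h0 : 0 ≤ p) (h1 : p ≤ 1) (hk : 1 ≤ k)
    (S : Finset J) (A : J → Finset ι)
    (hmult : ∀ i : ι, (S.filter fun j => i ∈ A j).card ≤ k)
    (hc : ∀ j ∈ S, (A j).card = c) (l : ℝ) :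
    Ex p (fun ω => Real.exp (l * (Yc S A ω - S.card * p ^ c)))
      ≤ Real.exp (l ^ 2 * ((k:ℝ) * S.card) / 8) := by
  classical
  have hq0 : 0 ≤ p ^ c := pow_nonneg h0 c
  have hq1 : p ^ c ≤ 1 := pow_le_one₀ h0 h1
  have e1 : (fun ω : ι → Bool => Real.exp (l * (Yc S A ω - S.card * p ^ c)))
      = fun ω => ∏ j ∈ S,
          Real.exp (l * ((if ∀ i ∈ A j, ω i = true then (1:ℝ) else 0) - p ^ c)) := by
    funext ω
    rw [← Real.exp_sum]
    congr 1
    rw [Yc_eq_sum]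
    rw [show (S.card : ℝ) * p ^ c = ∑ j ∈ S, p ^ c by rw [Finset.sum_const, nsmul_eq_mul]]
    rw [← Finset.sum_sub_distrib, Finset.mul_sum]
  rw [e1]
  have hfin := finner (J := J) hk h0 h1 Finset.univ S
    (fun j ω => Real.exp (l * ((if ∀ i ∈ A j, ω i = true then (1:ℝ) else 0) - p ^ c))) A
    (fun j _ ω => (Real.exp_pos _).le)
    (fun j _ ω ω' hagree => by
      have hiff : (∀ i ∈ A j, ω i = true) ↔ (∀ i ∈ A j, ω' i = true) := by
        constructor
        · intro h i hi; rw [← hagree i hi]; exact h i hi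
        · intro h i hi; rw [hagree i hi]; exact h i hi
      exact congrArg (fun z : ℝ => Real.exp (l * (z - p ^ c))) (if_congr hiff rfl rfl))
    (fun j _ => Finset.subset_univ _) hmult
  refine le_trans hfin ?_
  have hfle : ∀ j ∈ S,
      (Ex p (fun ω => Real.exp (l * ((if ∀ i ∈ A j, ω i = true then (1:ℝ) else 0) - p ^ c)) ^ k))
        ^ ((k:ℝ)⁻¹) ≤ Real.exp (l ^ 2 * (k:ℝ) / 8) := by
    intro j hj
    have hgk : (fun ω : ι → Bool =>
        Real.exp (l * ((if ∀ i ∈ A j, ω i = true then (1:ℝ) else 0) - p ^ c)) ^ k)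
        = fun ω => if ∀ i ∈ A j, ω i = true
            then Real.exp (((k:ℝ) * l) * (1 - p ^ c))
            else Real.exp (-(((k:ℝ) * l) * p ^ c)) := by
      funext ω
      by_cases h : ∀ i ∈ A j, ω i = true
      · rw [if_pos h, if_pos h, ← Real.exp_nat_mul]
        congr 1; ring
      · rw [if_neg h, if_neg h, ← Real.exp_nat_mul]
        congr 1; ring
    have hEx : Ex p (fun ω : ι → Bool =>
        Real.exp (l * ((if ∀ i ∈ A j, ω i = true then (1:ℝ) else 0) - p ^ c)) ^ k)
        = p ^ c * Real.exp (((k:ℝ) * l) * (1 - p ^ c))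
          + (1 - p ^ c) * Real.exp (-(((k:ℝ) * l) * p ^ c)) := by
      rw [hgk, Ex_bernoulli h0 h1 (A j), hc j hj]
    rw [hEx]
    have hhoef := hoeffding_bernoulli hq0 hq1 ((k:ℝ) * l)
    have hnn : (0:ℝ) ≤ p ^ c * Real.exp (((k:ℝ) * l) * (1 - p ^ c))
        + (1 - p ^ c) * Real.exp (-(((k:ℝ) * l) * p ^ c)) := by
      have := Real.exp_pos (((k:ℝ) * l) * (1 - p ^ c))
      have := Real.exp_pos (-(((k:ℝ) * l) * p ^ c))
      nlinarith
    calc (p ^ c * Real.exp (((k:ℝ) * l) * (1 - p ^ c))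
          + (1 - p ^ c) * Real.exp (-(((k:ℝ) * l) * p ^ c))) ^ ((k:ℝ)⁻¹)
        ≤ (Real.exp (((k:ℝ) * l) ^ 2 / 8)) ^ ((k:ℝ)⁻¹) :=
          Real.rpow_le_rpow hnn hhoef (by positivity)
      _ = Real.exp (l ^ 2 * (k:ℝ) / 8) := by
          rw [← Real.exp_mul]
          congr 1
          have hkne : ((k:ℝ)) ≠ 0 := by
            have : (0:ℕ) < k := hk
            positivity
          field_simp
  calc ∏ j ∈ S, (Ex p (fun ω =>
          Real.exp (l * ((if ∀ i ∈ A j, ω i = true then (1:ℝ) else 0) - p ^ c)) ^ k))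
            ^ ((k:ℝ)⁻¹)
      ≤ ∏ j ∈ S, Real.exp (l ^ 2 * (k:ℝ) / 8) := by
        refine Finset.prod_le_prod ?_ hfle
        intro j hj
        exact Real.rpow_nonneg
          (Ex_nonneg h0 h1 fun ω => pow_nonneg (Real.exp_pos _).le k) _
    _ = Real.exp (l ^ 2 * ((k:ℝ) * S.card) / 8) := by
        rw [Finset.prod_const, ← Real.exp_nat_mul]
        congr 1
        ring

/-- one-sided Chernoff bound from a sub-Gaussian mgf estimate -/
lemma chernoff_one {Z : (ι → Bool) → ℝ} {K u : ℝ} (h0 : 0 ≤ p) (h1 : p ≤ 1)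
    (hK : 0 < K) (hu : 0 < u)
    (hmgf : ∀ l : ℝ, Ex p (fun ω => Real.exp (l * Z ω)) ≤ Real.exp (l ^ 2 * K / 8)) :
    Ex p (fun ω => if u < Z ω then (1:ℝ) else 0) ≤ Real.exp (-(2 * u ^ 2 / K)) := by
  classical
  set l : ℝ := 4 * u / K with hl
  have hl0 : 0 < l := by positivity
  have hpoint : ∀ ω, (if u < Z ω then (1:ℝ) else 0)
      ≤ Real.exp (-(l * u)) * Real.exp (l * Z ω) := by
    intro ω
    rw [← Real.exp_add]
    by_cases h : u < Z ω
    · rw [if_pos h]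
      refine Real.one_le_exp ?_
      have : 0 ≤ l * (Z ω - u) := mul_nonneg hl0.le (by linarith)
      nlinarith
    · rw [if_neg h]
      exact (Real.exp_pos _).le
  calc Ex p (fun ω => if u < Z ω then (1:ℝ) else 0)
      ≤ Ex p (fun ω => Real.exp (-(l * u)) * Real.exp (l * Z ω)) :=
        Ex_mono h0 h1 hpoint
    _ = Real.exp (-(l * u)) * Ex p (fun ω => Real.exp (l * Z ω)) :=
        Ex_const_mul _ _
    _ ≤ Real.exp (-(l * u)) * Real.exp (l ^ 2 * K / 8) :=
        mul_le_mul_of_nonneg_left (hmgf l) (Real.exp_pos _).le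
    _ = Real.exp (-(l * u) + l ^ 2 * K / 8) := (Real.exp_add _ _).symm
    _ = Real.exp (-(2 * u ^ 2 / K)) := by
        congr 1
        rw [hl]
        field_simp
        ring

/-- two-sided tail bound for the read-`k` count -/
theorem tail_bound {k c : ℕ} (h0 : 0 ≤ p) (h1 : p ≤ 1) (hk : 1 ≤ k)
    (S : Finset J) (A : J → Finset ι)
    (hmult : ∀ i : ι, (S.filter fun j => i ∈ A j).card ≤ k)
    (hc : ∀ j ∈ S, (A j).card = c) {u : ℝ} (hu : 0 < u) (hS : 0 < S.card) :
    Ex p (fun ω => if u < |Yc S A ω - S.card * p ^ c| then (1:ℝ) else 0)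
      ≤ 2 * Real.exp (-(2 * u ^ 2 / ((k:ℝ) * S.card))) := by
  classical
  have hK : 0 < (k:ℝ) * S.card := by
    have h1' : (0:ℝ) < (k:ℝ) := by exact_mod_cast Nat.lt_of_lt_of_le Nat.zero_lt_one hk
    have h2' : (0:ℝ) < (S.card : ℝ) := by exact_mod_cast hS
    positivity
  have hup := chernoff_one (Z := fun ω => Yc S A ω - S.card * p ^ c) h0 h1 hK hu
    (fun l => mgf_bound h0 h1 hk S A hmult hc l)
  have hdownmgf : ∀ l : ℝ,
      Ex p (fun ω => Real.exp (l * (S.card * p ^ c - Yc S A ω)))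
        ≤ Real.exp (l ^ 2 * ((k:ℝ) * S.card) / 8) := by
    intro l
    have e : (fun ω : ι → Bool => Real.exp (l * (S.card * p ^ c - Yc S A ω)))
        = fun ω => Real.exp ((-l) * (Yc S A ω - S.card * p ^ c)) := by
      funext ω; congr 1; ring
    rw [e]
    have := mgf_bound h0 h1 hk S A hmult hc (-l)
    simpa using this
  have hdown := chernoff_one (Z := fun ω => S.card * p ^ c - Yc S A ω) h0 h1 hK hu hdownmgf
  have hsplit : ∀ ω, (if u < |Yc S A ω - S.card * p ^ c| then (1:ℝ) else 0)
      ≤ (if u < Yc S A ω - S.card * p ^ c then (1:ℝ) else 0)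
        + (if u < S.card * p ^ c - Yc S A ω then (1:ℝ) else 0) := by
    intro ω
    by_cases h : u < |Yc S A ω - S.card * p ^ c|
    · rw [if_pos h]
      rcases lt_abs.mp h with h' | h'
      · rw [if_pos h']
        have : (0:ℝ) ≤ if u < S.card * p ^ c - Yc S A ω then (1:ℝ) else 0 := by positivity
        linarith
      · rw [if_pos (by linarith : u < S.card * p ^ c - Yc S A ω)]
        have : (0:ℝ) ≤ if u < Yc S A ω - S.card * p ^ c then (1:ℝ) else 0 := by positivity
        linarith
    · rw [if_neg h]
      have h1' : (0:ℝ) ≤ if u < Yc S A ω - S.card * p ^ c then (1:ℝ) else 0 := by positivity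
      have h2' : (0:ℝ) ≤ if u < S.card * p ^ c - Yc S A ω then (1:ℝ) else 0 := by positivity
      linarith
  calc Ex p (fun ω => if u < |Yc S A ω - S.card * p ^ c| then (1:ℝ) else 0)
      ≤ Ex p (fun ω => (if u < Yc S A ω - S.card * p ^ c then (1:ℝ) else 0)
          + (if u < S.card * p ^ c - Yc S A ω then (1:ℝ) else 0)) :=
        Ex_mono h0 h1 hsplit
    _ = Ex p (fun ω => if u < Yc S A ω - S.card * p ^ c then (1:ℝ) else 0)
        + Ex p (fun ω => if u < S.card * p ^ c - Yc S A ω then (1:ℝ) else 0) :=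
        Ex_add _ _
    _ ≤ Real.exp (-(2 * u ^ 2 / ((k:ℝ) * S.card)))
        + Real.exp (-(2 * u ^ 2 / ((k:ℝ) * S.card))) := add_le_add hup hdown
    _ = 2 * Real.exp (-(2 * u ^ 2 / ((k:ℝ) * S.card))) := by ring

end MGF

end FourCore



namespace FourProfileSparsifier

variable {V : Type*} [Fintype V] [DecidableEq V]

/-- The random subgraph of `G` keeping exactly those edges `e` with `ω e = true`. -/
def keep (G : SimpleGraph V) [DecidableRel G.Adj] (ω : G.edgeFinset → Bool) :
    SimpleGraph V where
  Adj a b := ∃ h : G.Adj a b, ω ⟨s(a, b), SimpleGraph.mem_edgeFinset.mpr h⟩ = true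
  symm := by
    constructor
    rintro a b ⟨h, hw⟩
    refine ⟨h.symm, ?_⟩
    have key : (⟨s(b, a), SimpleGraph.mem_edgeFinset.mpr h.symm⟩ : G.edgeFinset) =
        ⟨s(a, b), SimpleGraph.mem_edgeFinset.mpr h⟩ := Subtype.ext (Sym2.eq_swap)
    rw [key, hw]
  loopless := by constructor; rintro a ⟨h, -⟩; exact h.ne rfl

instance (G : SimpleGraph V) [DecidableRel G.Adj] (ω : G.edgeFinset → Bool) :
    DecidableRel (keep G ω).Adj := fun _ _ => exists_prop_decidable _

/-- `N10`: the number of 4-cliques of `G`. -/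
def N10 (G : SimpleGraph V) [DecidableRel G.Adj] : ℕ := (G.cliqueFinset 4).card

/-- `k10`: the maximum number of 4-cliques of `G` sharing a common edge. -/
def k10 (G : SimpleGraph V) [DecidableRel G.Adj] : ℕ :=
  Finset.univ.sup fun x : V × V =>
    if G.Adj x.1 x.2 then
      ((G.cliqueFinset 4).filter fun s => x.1 ∈ s ∧ x.2 ∈ s).card
    else 0

/-- `Y10 ω`: the number of 4-cliques of the sparsified graph. -/
def Y10 (G : SimpleGraph V) [DecidableRel G.Adj] (ω : G.edgeFinset → Bool) : ℕ :=
  ((keep G ω).cliqueFinset 4).card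

open Classical in
/-- The probability of the event `A` under independent Bernoulli(`p`) retention of each
edge of `G`: the sample space is the set of functions `ω : E → Bool` equipped with the
product of Bernoulli(`p`) measures. -/
noncomputable def prob (G : SimpleGraph V) [DecidableRel G.Adj] (p : ℝ)
    (A : (G.edgeFinset → Bool) → Prop) : ℝ :=
  ∑ ω : G.edgeFinset → Bool,
    if A ω then ∏ e : G.edgeFinset, (if ω e then p else 1 - p) else 0


section Lemmas
variable (G : SimpleGraph V) [DecidableRel G.Adj]

/-- the edges of `G` inside the vertex set `T`, as elements of the edge subtype -/
def Aedges (T : Finset V) : Finset ↥G.edgeFinset :=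
  Finset.univ.filter (fun e => (e : Sym2 V) ∈ T.sym2)

lemma mem_Aedges {T : Finset V} (e : ↥G.edgeFinset) :
    e ∈ Aedges G T ↔ (e : Sym2 V) ∈ T.sym2 := by
  simp [Aedges]

lemma card_Aedges {T : Finset V} (hT : T ∈ G.cliqueFinset 4) :
    (Aedges G T).card = 6 := by
  classical
  have hT' := SimpleGraph.mem_cliqueFinset_iff.mp hT
  have h1 : (Aedges G T).card
      = (G.edgeFinset.filter (fun z => z ∈ T.sym2)).card := by
    rw [Aedges, Finset.univ_eq_attach,
      Finset.filter_attach (fun z : Sym2 V => z ∈ T.sym2) G.edgeFinset,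
      Finset.card_map, Finset.card_attach]
  have h2 : G.edgeFinset.filter (fun z => z ∈ T.sym2)
      = T.sym2.filter (fun z => ¬ z.IsDiag) := by
    ext z
    simp only [Finset.mem_filter, SimpleGraph.mem_edgeFinset]
    constructor
    · rintro ⟨he, hs⟩
      exact ⟨hs, SimpleGraph.not_isDiag_of_mem_edgeSet G he⟩
    · rintro ⟨hs, hd⟩
      refine ⟨?_, hs⟩
      induction z using Sym2.ind with
      | _ a b =>
        have hab := Finset.mk_mem_sym2_iff.mp hs
        have hne : a ≠ b := fun h => hd (Sym2.mk_isDiag_iff.mpr h)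
        exact (G.mem_edgeSet).mpr
          (hT'.1 (Finset.mem_coe.mpr hab.1) (Finset.mem_coe.mpr hab.2) hne)
  have h3 : (T.sym2.filter (fun z => z.IsDiag)).card = T.card := by
    symm
    refine Finset.card_bij (fun a _ => s(a, a)) ?_ ?_ ?_
    · intro a ha
      exact Finset.mem_filter.mpr ⟨Finset.mk_mem_sym2_iff.mpr ⟨ha, ha⟩, Sym2.mk_isDiag_iff.mpr rfl⟩
    · intro a ha b hb hab
      have := Sym2.eq_iff.mp hab
      simpa using this
    · intro z hz
      have hz' := Finset.mem_filter.mp hz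
      induction z using Sym2.ind with
      | _ x y =>
        have hxy : x = y := Sym2.mk_isDiag_iff.mp hz'.2
        subst hxy
        exact ⟨x, (Finset.mk_mem_sym2_iff.mp hz'.1).1, rfl⟩
  have h4 : T.sym2.card = 10 := by
    rw [Finset.card_sym2, hT'.card_eq]
    decide
  have h5 := Finset.card_filter_add_card_filter_not
    (s := T.sym2) (p := fun z => z.IsDiag)
  rw [h1, h2]
  rw [hT'.card_eq] at h3
  omega

lemma keep_cliqueFinset (ω : ↥G.edgeFinset → Bool) :
    (keep G ω).cliqueFinset 4
      = (G.cliqueFinset 4).filter (fun T => ∀ e ∈ Aedges G T, ω e = true) := by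
  classical
  ext T
  simp only [SimpleGraph.mem_cliqueFinset_iff, Finset.mem_filter]
  constructor
  · intro h
    have hle : keep G ω ≤ G := fun a b hab => hab.1
    have hGc : G.IsNClique 4 T := ⟨h.1.mono hle, h.2⟩
    refine ⟨hGc, ?_⟩
    intro e he
    have hes : (e : Sym2 V) ∈ T.sym2 := (mem_Aedges G e).mp he
    clear he
    obtain ⟨z, hz⟩ := e
    revert hes hz
    induction z using Sym2.ind with
    | _ a b =>
      intro hz hes
      have hab := Finset.mk_mem_sym2_iff.mp hes
      have hadj : G.Adj a b := (G.mem_edgeSet).mp (SimpleGraph.mem_edgeFinset.mp hz)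
      have hne : a ≠ b := G.ne_of_adj hadj
      have hk : (keep G ω).Adj a b :=
        h.1 (Finset.mem_coe.mpr hab.1) (Finset.mem_coe.mpr hab.2) hne
      obtain ⟨hadj', hw⟩ := hk
      exact hw
  · rintro ⟨hGc, hedges⟩
    constructor
    · intro a ha b hb hne
      have hadj : G.Adj a b := hGc.1 ha hb hne
      have hmem : (⟨s(a,b), SimpleGraph.mem_edgeFinset.mpr hadj⟩ : ↥G.edgeFinset)
          ∈ Aedges G T := by
        refine (mem_Aedges G _).mpr ?_
        exact Finset.mk_mem_sym2_iff.mpr ⟨Finset.mem_coe.mp ha, Finset.mem_coe.mp hb⟩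
      exact ⟨hadj, hedges _ hmem⟩
    · exact hGc.2

lemma Y10_eq (ω : ↥G.edgeFinset → Bool) :
    Y10 G ω = ((G.cliqueFinset 4).filter (fun T => ∀ e ∈ Aedges G T, ω e = true)).card := by
  rw [Y10, keep_cliqueFinset]

lemma mult_Aedges (e : ↥G.edgeFinset) :
    ((G.cliqueFinset 4).filter (fun T => e ∈ Aedges G T)).card ≤ k10 G := by
  classical
  obtain ⟨z, hz⟩ := e
  revert hz
  induction z using Sym2.ind with
  | _ a b =>
    intro hz
    have hadj : G.Adj a b := (G.mem_edgeSet).mp (SimpleGraph.mem_edgeFinset.mp hz)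
    have hfe : (G.cliqueFinset 4).filter
        (fun T => (⟨s(a,b), hz⟩ : ↥G.edgeFinset) ∈ Aedges G T)
        = (G.cliqueFinset 4).filter (fun T => a ∈ T ∧ b ∈ T) := by
      refine Finset.filter_congr fun T _ => ?_
      rw [mem_Aedges]
      exact Finset.mk_mem_sym2_iff
    rw [hfe]
    have hsup := Finset.le_sup (f := fun x : V × V =>
      if G.Adj x.1 x.2 then ((G.cliqueFinset 4).filter fun s => x.1 ∈ s ∧ x.2 ∈ s).card else 0)
      (Finset.mem_univ (a, b))
    rw [k10]
    simpa [if_pos hadj] using hsup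

lemma k10_pos (hN : 1 ≤ N10 G) : 1 ≤ k10 G := by
  classical
  have hcard : 0 < (G.cliqueFinset 4).card := hN
  obtain ⟨T, hT⟩ := Finset.card_pos.mp hcard
  have hGc := SimpleGraph.mem_cliqueFinset_iff.mp hT
  have h4 : 1 < T.card := by rw [hGc.card_eq]; norm_num
  obtain ⟨a, ha, b, hb, hne⟩ := Finset.one_lt_card.mp h4
  have hadj : G.Adj a b := hGc.1 (Finset.mem_coe.mpr ha) (Finset.mem_coe.mpr hb) hne
  have hTmem : T ∈ (G.cliqueFinset 4).filter (fun s => a ∈ s ∧ b ∈ s) :=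
    Finset.mem_filter.mpr ⟨hT, ha, hb⟩
  have h1 : 1 ≤ ((G.cliqueFinset 4).filter (fun s => a ∈ s ∧ b ∈ s)).card :=
    Finset.card_pos.mpr ⟨T, hTmem⟩
  calc 1 ≤ ((G.cliqueFinset 4).filter (fun s => a ∈ s ∧ b ∈ s)).card := h1
    _ = if G.Adj a b then ((G.cliqueFinset 4).filter fun s => a ∈ s ∧ b ∈ s).card else 0 :=
        (if_pos hadj).symm
    _ ≤ k10 G := by
        rw [k10]
        exact Finset.le_sup (f := fun x : V × V =>
          if G.Adj x.1 x.2 then ((G.cliqueFinset 4).filter fun s => x.1 ∈ s ∧ x.2 ∈ s).card else 0)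
          (Finset.mem_univ (a, b))

end Lemmas

open FourCore in
theorem statement0 (G : SimpleGraph V) [DecidableRel G.Adj]
    (p ε δ : ℝ) (hp0 : 0 < p) (hp1 : p ≤ 1) (hδ0 : 0 < δ) (hδ1 : δ < 1) (hε : 0 < ε)
    (hN : 1 ≤ N10 G)
    (hp : (Real.log (2 / δ) * (k10 G : ℝ) / (2 * ε ^ 2 * (N10 G : ℝ))) ^ ((1 : ℝ) / 12) ≤ p) :
    1 - δ ≤
      prob G p (fun ω => |(N10 G : ℝ) - (Y10 G ω : ℝ) / p ^ 6| ≤ ε * (N10 G : ℝ)) := by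
  classical
  have hk : 1 ≤ k10 G := k10_pos G hN
  have hS : 0 < (G.cliqueFinset 4).card := hN
  have hNR : (1:ℝ) ≤ (N10 G : ℝ) := by exact_mod_cast hN
  have hN0 : (0:ℝ) < (N10 G : ℝ) := by linarith
  have hkR : (0:ℝ) < (k10 G : ℝ) := by exact_mod_cast hk
  have hp6 : (0:ℝ) < p ^ 6 := by positivity
  have hNcard : (N10 G : ℝ) = ((G.cliqueFinset 4).card : ℝ) := rfl
  set Good : (↥G.edgeFinset → Bool) → Prop :=
    fun ω => |(N10 G : ℝ) - (Y10 G ω : ℝ) / p ^ 6| ≤ ε * (N10 G : ℝ) with hGood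
  set u : ℝ := ε * (N10 G : ℝ) * p ^ 6 with hu_def
  have hu : 0 < u := by positivity
  -- bridge between `prob` and `Ex`
  have hprob : ∀ (A' : (↥G.edgeFinset → Bool) → Prop),
      prob G p A' = Ex p (fun ω => if A' ω then (1:ℝ) else 0) := by
    intro A'
    rw [prob, Ex]
    refine Finset.sum_congr rfl fun ω _ => ?_
    by_cases h : A' ω <;> simp [h, wt]
  -- complement identity
  have hcompl : prob G p Good
      = 1 - Ex p (fun ω => if ¬ Good ω then (1:ℝ) else 0) := by
    have hpt : (fun ω : ↥G.edgeFinset → Bool =>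
        (if Good ω then (1:ℝ) else 0) + (if ¬ Good ω then (1:ℝ) else 0))
        = fun _ => (1:ℝ) := by
      funext ω
      by_cases h : Good ω <;> simp [h]
    have := Ex_add (p := p) (fun ω => if Good ω then (1:ℝ) else 0)
      (fun ω => if ¬ Good ω then (1:ℝ) else 0)
    rw [hpt, Ex_one] at this
    rw [hprob Good]
    linarith
  -- pointwise comparison of indicators
  have hpoint : ∀ ω : ↥G.edgeFinset → Bool,
      (if ¬ Good ω then (1:ℝ) else 0)
        ≤ (if u < |Yc (G.cliqueFinset 4) (Aedges G) ω
            - ((G.cliqueFinset 4).card : ℝ) * p ^ 6| then (1:ℝ) else 0) := by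
    intro ω
    by_cases h : Good ω
    · rw [if_neg (not_not_intro h)]
      positivity
    · rw [if_pos h, if_pos ?_]
      have hY : (Y10 G ω : ℝ) = Yc (G.cliqueFinset 4) (Aedges G) ω := by
        rw [Yc, Y10_eq]
      have habs : ε * (N10 G : ℝ) < |(N10 G : ℝ) - (Y10 G ω : ℝ) / p ^ 6| := by
        rw [hGood] at h
        exact lt_of_not_ge h
      have hxeq : Yc (G.cliqueFinset 4) (Aedges G) ω - ((G.cliqueFinset 4).card : ℝ) * p ^ 6
          = -((((N10 G : ℝ)) - (Y10 G ω : ℝ) / p ^ 6) * p ^ 6) := by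
        rw [← hY, ← hNcard]
        field_simp
        ring
      rw [hxeq, abs_neg, abs_mul, abs_of_pos hp6, hu_def]
      exact mul_lt_mul_of_pos_right habs hp6
  -- the read-k tail bound
  have htail := tail_bound (p := p) (k := k10 G) (c := 6) hp0.le hp1 hk
    (G.cliqueFinset 4) (Aedges G) (mult_Aedges G)
    (fun T hT => card_Aedges G hT) hu hS
  -- numeric comparison
  have hR0 : 0 ≤ Real.log (2 / δ) * (k10 G : ℝ) / (2 * ε ^ 2 * (N10 G : ℝ)) := by
    have hlog0 : 0 ≤ Real.log (2 / δ) := by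
      refine Real.log_nonneg ?_
      rw [le_div_iff₀ hδ0]
      linarith
    positivity
  have hp12 : Real.log (2 / δ) * (k10 G : ℝ) / (2 * ε ^ 2 * (N10 G : ℝ)) ≤ p ^ (12:ℕ) := by
    have h1 : ((Real.log (2 / δ) * (k10 G : ℝ) / (2 * ε ^ 2 * (N10 G : ℝ))) ^ ((1:ℝ)/12))
        ^ (12:ℕ) ≤ p ^ (12:ℕ) :=
      pow_le_pow_left₀ (Real.rpow_nonneg hR0 _) hp 12
    have h2 : ((Real.log (2 / δ) * (k10 G : ℝ) / (2 * ε ^ 2 * (N10 G : ℝ))) ^ ((1:ℝ)/12))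
        ^ (12:ℕ)
        = Real.log (2 / δ) * (k10 G : ℝ) / (2 * ε ^ 2 * (N10 G : ℝ)) := by
      rw [← Real.rpow_natCast ((Real.log (2 / δ) * (k10 G : ℝ)
        / (2 * ε ^ 2 * (N10 G : ℝ))) ^ ((1:ℝ)/12)) 12, ← Real.rpow_mul hR0]
      norm_num
    rwa [h2] at h1
  have hlogle : Real.log (2 / δ) ≤ 2 * u ^ 2 / ((k10 G : ℝ) * ((G.cliqueFinset 4).card : ℝ)) := by
    have hmul := (div_le_iff₀ (by positivity : (0:ℝ) < 2 * ε ^ 2 * (N10 G : ℝ))).mp hp12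
    rw [← hNcard, hu_def]
    rw [le_div_iff₀ (by positivity : (0:ℝ) < (k10 G : ℝ) * (N10 G : ℝ))]
    nlinarith [hmul]
  have hfinal : 2 * Real.exp (-(2 * u ^ 2 / ((k10 G : ℝ) * ((G.cliqueFinset 4).card : ℝ)))) ≤ δ := by
    have hexp : Real.exp (-(2 * u ^ 2 / ((k10 G : ℝ) * ((G.cliqueFinset 4).card : ℝ))))
        ≤ Real.exp (-(Real.log (2 / δ))) :=
      Real.exp_le_exp.mpr (neg_le_neg hlogle)
    have hv : Real.exp (-(Real.log (2 / δ))) = δ / 2 := by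
      rw [Real.exp_neg, Real.exp_log (by positivity : (0:ℝ) < 2 / δ)]
      rw [inv_div]
    rw [hv] at hexp
    linarith
  have hbadle : Ex p (fun ω => if ¬ Good ω then (1:ℝ) else 0) ≤ δ := by
    calc Ex p (fun ω => if ¬ Good ω then (1:ℝ) else 0)
        ≤ Ex p (fun ω => if u < |Yc (G.cliqueFinset 4) (Aedges G) ω
            - ((G.cliqueFinset 4).card : ℝ) * p ^ 6| then (1:ℝ) else 0) :=
          Ex_mono hp0.le hp1 hpoint
      _ ≤ 2 * Real.exp (-(2 * u ^ 2 / ((k10 G : ℝ) * ((G.cliqueFinset 4).card : ℝ)))) := htail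
      _ ≤ δ := hfinal
  rw [hcompl]
  linarith

end FourProfileSparsifier
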